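/- Let H be a finite-dimensional complex inner product space, b₀, b₁ unit vectors with |⟨b₀, b₁⟩| = cos α, and b₀', b₁' unit vectors of the form b₀' = cos β₀ · b₀ + sin β₀ · b₀^⊥ and b₁' = cos β₁ · b₁ + sin β₁ · b₁^⊥, where b₀^⊥ ⊥ b₀ and b₁^⊥ ⊥ b₁ are unit vectors, α, β₀, β₁ ∈ [0, π/2], and α + β₀ + β₁ < π/2. Then |⟨b₀', b₁'⟩| ≥ cos(α + β₀ + β₁). -/

import Mathlib

open Real

set_option maxHeartbeats 1000000

lemma bessel2 {H : Type*} [NormedAddCommGroup H] [InnerProductSpace ℂ H]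
    (u v x : H) (hu : ‖u‖ = 1) (hv : ‖v‖ = 1) (huv : (inner ℂ u v : ℂ) = 0) :
    ‖(inner ℂ u x : ℂ)‖ ^ 2 + ‖(inner ℂ v x : ℂ)‖ ^ 2 ≤ ‖x‖ ^ 2 := by
  classical
  set f : Bool → H := fun b => if b then u else v with hf
  have horth : Orthonormal ℂ f := by
    rw [orthonormal_iff_ite]
    intro i j
    have huv' : (inner ℂ v u : ℂ) = 0 := by
      rw [← inner_conj_symm, huv, map_zero]
    cases i <;> cases j <;>
      simp [f, huv, huv', inner_self_eq_norm_sq_to_K, hu, hv]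
  have := horth.sum_inner_products_le (s := Finset.univ) x
  simpa [f, Fintype.sum_bool] using this

theorem stmt_8 {H : Type*} [NormedAddCommGroup H] [InnerProductSpace ℂ H]
    [FiniteDimensional ℂ H]
    (α β₀ β₁ : ℝ)
    (hα : 0 ≤ α ∧ α ≤ π / 2) (hβ₀ : 0 ≤ β₀ ∧ β₀ ≤ π / 2) (hβ₁ : 0 ≤ β₁ ∧ β₁ ≤ π / 2)
    (hsum : α + β₀ + β₁ < π / 2)
    (b₀ b₁ b₀p b₁p b₀' b₁' : H)
    (hb₀ : ‖b₀‖ = 1) (hb₁ : ‖b₁‖ = 1) (hb₀p : ‖b₀p‖ = 1) (hb₁p : ‖b₁p‖ = 1)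
    (horth₀ : (inner ℂ b₀p b₀ : ℂ) = 0) (horth₁ : (inner ℂ b₁p b₁ : ℂ) = 0)
    (hov : ‖(inner ℂ b₀ b₁ : ℂ)‖ = Real.cos α)
    (hb₀' : b₀' = ((Real.cos β₀ : ℝ) : ℂ) • b₀ + ((Real.sin β₀ : ℝ) : ℂ) • b₀p)
    (hb₁' : b₁' = ((Real.cos β₁ : ℝ) : ℂ) • b₁ + ((Real.sin β₁ : ℝ) : ℂ) • b₁p) :
    ‖(inner ℂ b₀' b₁' : ℂ)‖ ≥ Real.cos (α + β₀ + β₁) := by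
  obtain ⟨hα0, hα2⟩ := hα
  obtain ⟨hβ₀0, hβ₀2⟩ := hβ₀
  obtain ⟨hβ₁0, hβ₁2⟩ := hβ₁
  have hπ : (0:ℝ) < π := Real.pi_pos
  have hsβ₀ : 0 ≤ Real.sin β₀ := Real.sin_nonneg_of_nonneg_of_le_pi hβ₀0 (by linarith)
  have hsβ₁ : 0 ≤ Real.sin β₁ := Real.sin_nonneg_of_nonneg_of_le_pi hβ₁0 (by linarith)
  have hcβ₀ : 0 ≤ Real.cos β₀ := Real.cos_nonneg_of_mem_Icc ⟨by linarith, hβ₀2⟩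
  have hcβ₁ : 0 ≤ Real.cos β₁ := Real.cos_nonneg_of_mem_Icc ⟨by linarith, hβ₁2⟩
  have hsα : 0 ≤ Real.sin α := Real.sin_nonneg_of_nonneg_of_le_pi hα0 (by linarith)
  have horth₀' : (inner ℂ b₀ b₀p : ℂ) = 0 := by
    rw [← inner_conj_symm, horth₀, map_zero]
  have horth₁' : (inner ℂ b₁ b₁p : ℂ) = 0 := by
    rw [← inner_conj_symm, horth₁, map_zero]
  -- step 1 : ‖⟨b₀p, b₁⟩‖ ≤ sin α
  have hB1 := bessel2 b₀ b₀p b₁ hb₀ hb₀p horth₀'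
  rw [hov, hb₁, one_pow] at hB1
  have h1 : ‖(inner ℂ b₀p b₁ : ℂ)‖ ≤ Real.sin α := by
    have hs2 : Real.sin α ^ 2 = 1 - Real.cos α ^ 2 := by
      have := Real.sin_sq_add_cos_sq α; linarith
    nlinarith [norm_nonneg (inner ℂ b₀p b₁ : ℂ)]
  -- inner expansion of b₀' with b₁
  have hx : (inner ℂ b₀' b₁ : ℂ)
      = (Real.cos β₀ : ℂ) * (inner ℂ b₀ b₁ : ℂ) + (Real.sin β₀ : ℂ) * (inner ℂ b₀p b₁ : ℂ) := by
    rw [hb₀', inner_add_left, inner_smul_left, inner_smul_left,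
      Complex.conj_ofReal, Complex.conj_ofReal]
  set t := ‖(inner ℂ b₀' b₁ : ℂ)‖ with ht
  have h2 : Real.cos (α + β₀) ≤ t := by
    have hrw : (Real.cos β₀ : ℂ) * (inner ℂ b₀ b₁ : ℂ)
        = (inner ℂ b₀' b₁ : ℂ) - (Real.sin β₀ : ℂ) * (inner ℂ b₀p b₁ : ℂ) := by
      rw [hx]; ring
    have htri : ‖(Real.cos β₀ : ℂ) * (inner ℂ b₀ b₁ : ℂ)‖
        ≤ t + ‖(Real.sin β₀ : ℂ) * (inner ℂ b₀p b₁ : ℂ)‖ := by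
      rw [hrw, ht]; exact norm_sub_le _ _
    have e1 : ‖(Real.cos β₀ : ℂ) * (inner ℂ b₀ b₁ : ℂ)‖ = Real.cos β₀ * Real.cos α := by
      rw [norm_mul, Complex.norm_real, Real.norm_eq_abs, abs_of_nonneg hcβ₀, hov]
    have e2 : ‖(Real.sin β₀ : ℂ) * (inner ℂ b₀p b₁ : ℂ)‖
        = Real.sin β₀ * ‖(inner ℂ b₀p b₁ : ℂ)‖ := by
      rw [norm_mul, Complex.norm_real, Real.norm_eq_abs, abs_of_nonneg hsβ₀]
    rw [e1, e2] at htri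
    have := Real.cos_add α β₀
    nlinarith
  -- b₀' is a unit vector
  have hb₀'n : ‖b₀'‖ = 1 := by
    have expand : (inner ℂ b₀' b₀' : ℂ)
        = (Real.cos β₀ : ℂ) * (Real.cos β₀ : ℂ) + (Real.sin β₀ : ℂ) * (Real.sin β₀ : ℂ) := by
      have e0 : (inner ℂ b₀ b₀ : ℂ) = ((1:ℝ) : ℂ) := by
        rw [inner_self_eq_norm_sq_to_K, hb₀]; norm_num
      have e0p : (inner ℂ b₀p b₀p : ℂ) = ((1:ℝ) : ℂ) := by
        rw [inner_self_eq_norm_sq_to_K, hb₀p]; norm_num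
      simp only [hb₀', inner_add_left, inner_add_right, inner_smul_left, inner_smul_right,
        Complex.conj_ofReal, horth₀, horth₀', e0, e0p]
      push_cast
      ring
    have hpy : (inner ℂ b₀' b₀' : ℂ) = ((1:ℝ) : ℂ) := by
      rw [expand]
      push_cast
      norm_cast
      nlinarith [Real.sin_sq_add_cos_sq β₀]
    have hsq : ((‖b₀'‖ : ℂ)) ^ 2 = ((1:ℝ) : ℂ) :=
      (inner_self_eq_norm_sq_to_K (𝕜 := ℂ) b₀').symm.trans hpy
    have hsq' : ‖b₀'‖ ^ 2 = 1 := by exact_mod_cast hsq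
    nlinarith [norm_nonneg b₀']
  -- t ≤ 1 and bound on ‖⟨b₀', b₁p⟩‖
  have h3 : t ≤ 1 := by
    have := norm_inner_le_norm (𝕜 := ℂ) b₀' b₁
    rw [hb₀'n, hb₁] at this; simpa using this
  have hB2 := bessel2 b₁ b₁p b₀' hb₁ hb₁p horth₁'
  rw [hb₀'n, one_pow] at hB2
  have hsym : ‖(inner ℂ b₁ b₀' : ℂ)‖ = t := norm_inner_symm b₁ b₀'
  set s := ‖(inner ℂ b₁p b₀' : ℂ)‖ with hs
  have h4 : s ^ 2 ≤ 1 - t ^ 2 := by rw [hsym] at hB2; linarith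
  -- expand final inner product
  have hy : (inner ℂ b₀' b₁' : ℂ)
      = (Real.cos β₁ : ℂ) * (inner ℂ b₀' b₁ : ℂ)
        + (Real.sin β₁ : ℂ) * (inner ℂ b₀' b₁p : ℂ) := by
    rw [hb₁', inner_add_right, inner_smul_right, inner_smul_right]
  have hs' : ‖(inner ℂ b₀' b₁p : ℂ)‖ = s := norm_inner_symm b₀' b₁p
  have h5 : Real.cos β₁ * t - Real.sin β₁ * s ≤ ‖(inner ℂ b₀' b₁' : ℂ)‖ := by
    have hrw : (Real.cos β₁ : ℂ) * (inner ℂ b₀' b₁ : ℂ)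
        = (inner ℂ b₀' b₁' : ℂ) - (Real.sin β₁ : ℂ) * (inner ℂ b₀' b₁p : ℂ) := by
      rw [hy]; ring
    have htri : ‖(Real.cos β₁ : ℂ) * (inner ℂ b₀' b₁ : ℂ)‖
        ≤ ‖(inner ℂ b₀' b₁' : ℂ)‖ + ‖(Real.sin β₁ : ℂ) * (inner ℂ b₀' b₁p : ℂ)‖ := by
      rw [hrw]; exact norm_sub_le _ _
    have e1 : ‖(Real.cos β₁ : ℂ) * (inner ℂ b₀' b₁ : ℂ)‖ = Real.cos β₁ * t := by
      rw [norm_mul, Complex.norm_real, Real.norm_eq_abs, abs_of_nonneg hcβ₁, ht]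
    have e2 : ‖(Real.sin β₁ : ℂ) * (inner ℂ b₀' b₁p : ℂ)‖ = Real.sin β₁ * s := by
      rw [norm_mul, Complex.norm_real, Real.norm_eq_abs, abs_of_nonneg hsβ₁, hs']
    rw [e1, e2] at htri
    linarith
  -- use arccos
  set δ := Real.arccos t with hδ
  have hδ0 : 0 ≤ δ := Real.arccos_nonneg t
  have hδπ : δ ≤ π := Real.arccos_le_pi t
  have hcosδ : Real.cos δ = t :=
    Real.cos_arccos (by nlinarith [Real.neg_one_le_cos (α + β₀)]) h3
  have hsinδ : Real.sin δ = Real.sqrt (1 - t ^ 2) := Real.sin_arccos t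
  have hδle : δ ≤ α + β₀ := by
    by_contra hlt
    push_neg at hlt
    have := Real.strictAntiOn_cos ⟨by linarith, by linarith⟩ ⟨hδ0, hδπ⟩ hlt
    rw [hcosδ] at this
    linarith
  have hsle : s ≤ Real.sin δ := by
    rw [hsinδ]
    have hsnn : 0 ≤ s := norm_nonneg _
    have h1t : 0 ≤ 1 - t ^ 2 := by nlinarith [norm_nonneg (inner ℂ b₁p b₀' : ℂ)]
    nlinarith [Real.sq_sqrt h1t, Real.sqrt_nonneg (1 - t ^ 2)]
  have hfin : Real.cos (α + β₀ + β₁) ≤ Real.cos β₁ * t - Real.sin β₁ * s := by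
    have hc1 : Real.cos (δ + β₁) = Real.cos β₁ * t - Real.sin β₁ * Real.sin δ := by
      rw [Real.cos_add, hcosδ]; ring
    have hc2 : Real.cos (α + β₀ + β₁) ≤ Real.cos (δ + β₁) :=
      Real.cos_le_cos_of_nonneg_of_le_pi (by linarith) (by linarith) (by linarith)
    nlinarith
  linarith
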